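/- There exists a noncommutative ring R of order 8 and characteristic 4 such that a² ∈ 2R for every a ∈ R, and every element of R is nilpotent. -/
import Mathlib


/-- Iterated product: npow' a n = a^(n+1) in a non-unital ring. -/
def npow' {R : Type*} [NonUnitalRing R] (a : R) : ℕ → R
  | 0 => a
  | n + 1 => npow' a n * a

structure R8 where
  x : ZMod 2
  b : ZMod 4
deriving DecidableEq, Fintype

namespace R8

instance : Zero R8 := ⟨⟨0, 0⟩⟩
instance : Add R8 := ⟨fun a c => ⟨a.x + c.x, a.b + c.b⟩⟩
instance : Neg R8 := ⟨fun a => ⟨-a.x, -a.b⟩⟩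
instance : Mul R8 := ⟨fun a c => ⟨0, 2 * (a.x.val : ZMod 4) * c.b⟩⟩

set_option maxHeartbeats 4000000 in
instance : NonUnitalRing R8 where
  add_assoc := by decide
  zero_add := by decide
  add_zero := by decide
  add_comm := by decide
  neg_add_cancel := by decide
  nsmul := nsmulRec
  zsmul := zsmulRec
  left_distrib := by decide
  right_distrib := by decide
  zero_mul := by decide
  mul_zero := by decide
  mul_assoc := by decide

end R8

set_option maxHeartbeats 4000000 in
/-- There exists a noncommutative ring of order 8 and characteristic 4 with
a² ∈ 2R for all a, in which every element is nilpotent. -/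
theorem stmt_4 :
    ∃ (R : Type) (_ : NonUnitalRing R) (_ : Fintype R),
      Fintype.card R = 8 ∧
      (∃ a b : R, a * b ≠ b * a) ∧
      (∀ a : R, a + a + a + a = 0) ∧
      (∃ a : R, a + a ≠ 0) ∧
      (∀ a : R, ∃ r : R, a * a = r + r) ∧
      (∀ a : R, ∃ n : ℕ, npow' a n = 0) := by
  refine ⟨R8, inferInstance, inferInstance, by decide, by decide, by decide, by decide,
    by decide, fun a => ⟨2, ?_⟩⟩
  show a * a * a = 0
  revert a; decide
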